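/- On any reflexive, transitive, strongly convergent frame, the interaction principle [B]φ → [K][B]φ is valid: for any φ : W → Prop and world w, if φ holds at all R_B-successors of w, then for every R-successor v of w, φ holds at all R_B-successors of v. -/
import Mathlib

def RB {W : Type*} (R : W → W → Prop) (w u : W) : Prop := ∀ v, R w v → R v u

theorem B_to_KB {W : Type*} [Nonempty W] (R : W → W → Prop)
    (hrefl : ∀ w, R w w) (htrans : ∀ w v u, R w v → R v u → R w u)
    (hconv : ∀ w, ∃ u, ∀ v, R w v → R v u)
    (φ : W → Prop) (w : W) (h : ∀ u, RB R w u → φ u) :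
    ∀ v, R w v → ∀ u, RB R v u → φ u := by
  intro v hwv u hvu
  obtain ⟨t, ht⟩ := hconv w
  exact h u (fun x hwx => htrans x t u (ht x hwx) (hvu t (ht v hwv)))
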